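/- Let V be a finite-dimensional complex vector space, let f be a linear endomorphism of V that is not nilpotent, and let λ ∈ ℂ. If λ • f is similar to f, then λ is a root of unity, i.e. there exists a positive integer n with λ^n = 1. -/

import Mathlib

open Polynomial in
/-- A non-nilpotent endomorphism of a finite-dimensional complex vector space has a
nonzero spectral value. -/
lemma exists_ne_zero_mem_spectrum_of_not_isNilpotent
    {V : Type*} [AddCommGroup V] [Module ℂ V] [FiniteDimensional ℂ V]
    (f : V →ₗ[ℂ] V) (hf : ¬ IsNilpotent f) :
    ∃ μ ∈ spectrum ℂ f, μ ≠ 0 := by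
  by_contra hc
  push_neg at hc
  apply hf
  -- all roots of the minimal polynomial are zero, hence minpoly = X ^ d
  set p := minpoly ℂ f with hp
  have hmonic : p.Monic := minpoly.monic (Algebra.IsIntegral.isIntegral f)
  have hsplit : p.Splits := IsAlgClosed.splits p
  have hroots : ∀ a ∈ p.roots, a = 0 := by
    intro a ha
    have hroot : p.IsRoot a := isRoot_of_mem_roots ha
    have : Module.End.HasEigenvalue f a := Module.End.hasEigenvalue_iff_isRoot.mpr hroot
    exact hc a (Module.End.hasEigenvalue_iff_mem_spectrum.mp this)
  have hpeq : p = X ^ p.natDegree := by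
    have h1 := Splits.eq_prod_roots_of_monic hsplit hmonic
    have h2 : (p.roots.map fun a => X - C a).prod = X ^ Multiset.card p.roots := by
      rw [← Multiset.prod_replicate]
      congr 1
      rw [Multiset.eq_replicate]
      constructor
      · simp
      · intro b hb
        obtain ⟨a, ha, rfl⟩ := Multiset.mem_map.mp hb
        rw [hroots a ha, map_zero, sub_zero]
    have h3 : Multiset.card p.roots = p.natDegree :=
      (splits_iff_card_roots.mp hsplit)
    rw [h2, h3] at h1
    exact h1
  refine ⟨p.natDegree, ?_⟩
  have := minpoly.aeval ℂ f
  rw [← hp, hpeq] at this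
  simpa using this

open Pointwise

/-- Roots-of-unity form of Lemma 5.1: if `f` is a non-nilpotent endomorphism of a
finite-dimensional complex vector space and `λ • f` is similar to `f`, then `λ` is a
root of unity. -/
theorem stmt_4 {V : Type*} [AddCommGroup V] [Module ℂ V] [FiniteDimensional ℂ V]
    (f : V →ₗ[ℂ] V) (hf : ¬ IsNilpotent f) (l : ℂ)
    (h : ∃ u : V ≃ₗ[ℂ] V, l • f = u.toLinearMap ∘ₗ f ∘ₗ u.symm.toLinearMap) :
    ∃ n : ℕ, 0 < n ∧ l ^ n = 1 := by
  obtain ⟨u, hu⟩ := h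
  -- l ≠ 0
  have hl : l ≠ 0 := by
    rintro rfl
    apply hf
    have : f = 0 := by
      have := congrArg
        (fun g => u.symm.toLinearMap ∘ₗ g ∘ₗ u.toLinearMap) hu
      simp only [zero_smul] at this
      ext x
      have := congrArg (fun g : V →ₗ[ℂ] V => g x) this
      simpa using this.symm
    rw [this]
    exact IsNilpotent.zero
  -- view u as a unit of the endomorphism ring
  set w : (Module.End ℂ V)ˣ :=
    ⟨u.toLinearMap, u.symm.toLinearMap,
      by ext x; simp [Module.End.mul_apply],
      by ext x; simp [Module.End.mul_apply]⟩ with hw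
  have hconj : l • f = (w : Module.End ℂ V) * f * (w⁻¹ : (Module.End ℂ V)ˣ) := by
    rw [hu]; rfl
  have hspec : spectrum ℂ (l • f) = spectrum ℂ f := by
    rw [hconj]; exact spectrum.units_conjugate
  have hsmul : spectrum ℂ (l • f) = (l • spectrum ℂ f : Set ℂ) := by
    have := spectrum.unit_smul_eq_smul (R := ℂ) f (Units.mk0 l hl)
    simpa [Units.smul_def] using this
  have key : (l • spectrum ℂ f : Set ℂ) = spectrum ℂ f := by rw [← hsmul, hspec]
  -- there is a nonzero spectral value μ
  obtain ⟨μ, hμmem, hμ⟩ := exists_ne_zero_mem_spectrum_of_not_isNilpotent f hf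
  -- all l ^ k * μ lie in the finite spectrum
  have hmem : ∀ k : ℕ, l ^ k * μ ∈ spectrum ℂ f := by
    intro k
    induction k with
    | zero => simpa using hμmem
    | succ k ih =>
      have : l • (l ^ k * μ) ∈ (l • spectrum ℂ f : Set ℂ) := Set.smul_mem_smul_set ih
      rw [key] at this
      have heq : l • (l ^ k * μ) = l ^ (k + 1) * μ := by
        simp [smul_eq_mul, pow_succ]; ring
      rwa [heq] at this
  have hfin : (spectrum ℂ f).Finite := Module.End.finite_spectrum f
  -- pigeonhole
  have : ∃ i ∈ (Set.univ : Set ℕ), ∃ j ∈ (Set.univ : Set ℕ),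
      i ≠ j ∧ l ^ i * μ = l ^ j * μ := by
    apply Set.Infinite.exists_ne_map_eq_of_mapsTo Set.infinite_univ
      (fun k _ => hmem k) hfin
  obtain ⟨i, -, j, -, hij, heq⟩ := this
  wlog hlt : i < j generalizing i j
  · exact this j i hij.symm heq.symm (by omega)
  have hl' : l ^ i ≠ 0 := pow_ne_zero _ hl
  have h1 : l ^ i = l ^ j := mul_right_cancel₀ hμ heq
  have h2 : l ^ i * l ^ (j - i) = l ^ i * 1 := by
    rw [mul_one, ← pow_add]
    rw [h1]
    congr 1
    omega
  refine ⟨j - i, by omega, mul_left_cancel₀ hl' h2⟩
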